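/- For λ > 0, k ≥ 2, integer r ≥ k, and x ∈ (0,1], if D ~ Poisson(λ) and q_j(p) := P(D_p ≥ j) = ψ_j(λp), then the covariance formula σ_{rW}(x) := 2 x^{r+2} ∑_{j=r}^∞ C(j−1, r−1) ∫_x^1 (p−x)^{j−r} p^{−j−2} q_j'(p) dp simplifies to σ_{rW}(x) = ((λx)^r e^{−λx}/(r−1)!)·(1 − x²). -/

import Mathlib

open Real MeasureTheory intervalIntegral

noncomputable def poissonProb (j : ℕ) (μ : ℝ) : ℝ := μ ^ j * Real.exp (-μ) / j.factorial

/-- Example 5.2 together with (5.56): in the Poisson case `q_j'(p) = λ π_{j-1}(λp)` and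
`σ_{rW}(x) = (λx)^r e^{-λx} (1-x²)/(r-1)!`. -/
theorem sigma_rW_poisson (lam : ℝ) (hlam : 0 < lam) (k r : ℕ) (hk : 2 ≤ k) (hr : k ≤ r)
    (x : ℝ) (hx : x ∈ Set.Ioc (0:ℝ) 1) :
    2 * x ^ (r + 2) * ∑' i : ℕ, ((r + i - 1).choose (r - 1) : ℝ) *
        ∫ p in x..1, (p - x) ^ i * (lam * poissonProb (r + i - 1) (lam * p)) / p ^ (r + i + 2)
      = (lam * x) ^ r * Real.exp (-(lam * x)) / (r - 1).factorial * (1 - x ^ 2) := by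
  obtain ⟨hx0, hx1⟩ := hx
  obtain ⟨m, rfl⟩ : ∃ m, r = m + 1 := ⟨r - 1, by omega⟩
  have hxne : x ≠ 0 := ne_of_gt hx0
  -- the simplified integrands
  set f : ℕ → ℝ → ℝ := fun i p =>
    lam ^ (m + 1 + i) * (p - x) ^ i / (m.factorial * i.factorial) *
      (Real.exp (-(lam * p)) / p ^ 3) with hf
  -- Step 1: each term equals the set integral of `f i`
  have key : ∀ i : ℕ, ((m + 1 + i - 1).choose (m + 1 - 1) : ℝ) *
      ∫ p in x..1, (p - x) ^ i * (lam * poissonProb (m + 1 + i - 1) (lam * p)) / p ^ (m + 1 + i + 2)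
      = ∫ p in Set.Ioc x 1, f i p := by
    intro i
    have e1 : m + 1 + i - 1 = m + i := by omega
    have e2 : m + 1 - 1 = m := by omega
    rw [e1, e2, intervalIntegral.integral_of_le hx1, ← MeasureTheory.integral_const_mul]
    refine setIntegral_congr_fun measurableSet_Ioc fun p hp => ?_
    have hp0 : 0 < p := lt_trans hx0 hp.1
    have hcast : ((m + i).choose m : ℝ) * m.factorial * i.factorial = (m + i).factorial := by
      exact_mod_cast congrArg (Nat.cast (R := ℝ))
        (by simpa using Nat.choose_mul_factorial_mul_factorial (Nat.le_add_right m i))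
    have hchoose : (0 : ℝ) < ((m + i).choose m : ℝ) := by
      exact_mod_cast Nat.choose_pos (Nat.le_add_right m i)
    have e3 : m + 1 + i + 2 = (m + i) + 3 := by omega
    simp only [hf, poissonProb, e3, pow_add, mul_pow]
    rw [← hcast]
    have h1 : (m.factorial : ℝ) ≠ 0 := Nat.cast_ne_zero.2 m.factorial_ne_zero
    have h2 : (i.factorial : ℝ) ≠ 0 := Nat.cast_ne_zero.2 i.factorial_ne_zero
    field_simp
  -- continuity / integrability
  have hint : ∀ i : ℕ, IntegrableOn (f i) (Set.Ioc x 1) := by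
    intro i
    have hcont : ContinuousOn (f i) (Set.Icc x 1) := by
      apply ContinuousOn.mul (Continuous.continuousOn (by continuity))
      exact ContinuousOn.div (Continuous.continuousOn (by continuity))
        (continuous_pow 3).continuousOn
        (fun p hp => pow_ne_zero _ (ne_of_gt (lt_of_lt_of_le hx0 hp.1)))
    exact (hcont.integrableOn_Icc).mono_set Set.Ioc_subset_Icc_self
  -- summability of the norms of the integrals
  have hMsum : Summable (fun i : ℕ =>
      (lam * (1 - x)) ^ i / i.factorial * (lam ^ (m + 1) / (m.factorial * x ^ 3))) :=
    (Real.summable_pow_div_factorial _).mul_right _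
  have hsum : Summable fun i : ℕ => ∫ p in Set.Ioc x 1, ‖f i p‖ := by
    refine Summable.of_nonneg_of_le
      (fun i => integral_nonneg fun p => norm_nonneg _) (fun i => ?_) hMsum
    set M : ℝ := (lam * (1 - x)) ^ i / i.factorial * (lam ^ (m + 1) / (m.factorial * x ^ 3))
      with hM
    have hMnn : 0 ≤ M := by
      apply mul_nonneg (div_nonneg (pow_nonneg (mul_nonneg hlam.le (by linarith)) _)
        (Nat.cast_nonneg _))
      positivity
    have hb : ∀ p ∈ Set.Ioc x 1, ‖‖f i p‖‖ ≤ M := by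
      intro p hp
      have hp0 : 0 < p := lt_trans hx0 hp.1
      have h0 : (0:ℝ) ≤ 1 - x := by linarith
      have hfp : 0 ≤ f i p := by
        apply mul_nonneg (div_nonneg (mul_nonneg (pow_nonneg hlam.le _)
          (pow_nonneg (by linarith [hp.1]) _)) (by positivity)) (by positivity)
      rw [norm_norm, Real.norm_of_nonneg hfp, hf, hM]
      calc lam ^ (m + 1 + i) * (p - x) ^ i / (m.factorial * i.factorial) *
            (Real.exp (-(lam * p)) / p ^ 3)
          ≤ lam ^ (m + 1 + i) * (1 - x) ^ i / (m.factorial * i.factorial) * (1 / x ^ 3) := by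
            gcongr <;> first
              | linarith [hp.1, hp.2]
              | (rw [Real.exp_le_one_iff]; nlinarith [hp.1, hp.2])
        _ = (lam * (1 - x)) ^ i / i.factorial * (lam ^ (m + 1) / (m.factorial * x ^ 3)) := by
            rw [pow_add, mul_pow]; ring
    calc ∫ p in Set.Ioc x 1, ‖f i p‖
        ≤ M * (volume (Set.Ioc x 1)).toReal := by
          apply le_trans (le_abs_self _)
          exact norm_setIntegral_le_of_norm_le_const
            (by rw [Real.volume_Ioc]; exact ENNReal.ofReal_lt_top) hb
      _ ≤ M * 1 := by
          apply mul_le_mul_of_nonneg_left _ hMnn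
          rw [Real.volume_Ioc, ENNReal.toReal_ofReal (by linarith)]
          linarith
      _ = M := mul_one M
  -- interchange sum and integral
  have hswap : ∑' i : ℕ, ∫ p in Set.Ioc x 1, f i p
      = ∫ p in Set.Ioc x 1, ∑' i : ℕ, f i p :=
    MeasureTheory.integral_tsum_of_summable_integral_norm hint hsum
  -- pointwise value of the series
  have hexp : ∀ t : ℝ, ∑' i : ℕ, t ^ i / i.factorial = Real.exp t := fun t => by
    rw [Real.exp_eq_exp_ℝ, NormedSpace.exp_eq_tsum_div]
  have htsum : Set.EqOn (fun p => ∑' i : ℕ, f i p)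
      (fun p => lam ^ (m + 1) * Real.exp (-(lam * x)) / m.factorial * p ^ (-3 : ℤ))
      (Set.Ioc x 1) := by
    intro p hp
    have hp0 : 0 < p := lt_trans hx0 hp.1
    have hz : (p:ℝ) ^ (-3 : ℤ) = (p ^ 3)⁻¹ := by rw [zpow_neg]; norm_cast
    calc ∑' i : ℕ, f i p
        = (∑' i : ℕ, (lam * (p - x)) ^ i / i.factorial) *
            (lam ^ (m + 1) * Real.exp (-(lam * p)) / (m.factorial * p ^ 3)) := by
          rw [← tsum_mul_right]
          exact tsum_congr fun i => by rw [hf]; simp only; rw [pow_add, mul_pow]; ring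
      _ = lam ^ (m + 1) * Real.exp (-(lam * x)) / m.factorial * p ^ (-3 : ℤ) := by
          rw [hexp, hz, show -(lam * x) = lam * (p - x) + -(lam * p) by ring, Real.exp_add]
          ring
  -- put everything together
  rw [tsum_congr key, hswap, setIntegral_congr_fun measurableSet_Ioc htsum,
    MeasureTheory.integral_const_mul, ← intervalIntegral.integral_of_le hx1,
    integral_zpow (Or.inr ⟨by norm_num,
      by rw [Set.uIcc_of_le hx1]; exact fun h => absurd h.1 (by linarith)⟩)]
  have e2 : (m + 1 : ℕ) - 1 = m := by omega
  rw [e2]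
  have hz1 : ((1:ℝ)) ^ (-3 + 1 : ℤ) = 1 := one_zpow _
  have hzx : (x:ℝ) ^ (-3 + 1 : ℤ) = (x ^ 2)⁻¹ := by
    rw [show (-3 + 1 : ℤ) = -2 by norm_num, zpow_neg]; norm_cast
  have hm : (m.factorial : ℝ) ≠ 0 := Nat.cast_ne_zero.2 m.factorial_ne_zero
  rw [hz1, hzx, mul_pow]
  field_simp
  ring
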